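/- Let S ⊆ ℝ^n be a regular t-simplex with vertices v_0,…,v_t. Then the following are equivalent: (i) S is strongly regular, i.e., gcd(den(v_0),…,den(v_t)) = 1; (ii) S is anchored, i.e., the affine hull of S intersects ℤ^n (there exist real numbers λ_0,…,λ_t with λ_0 + ⋯ + λ_t = 1 and λ_0 v_0 + ⋯ + λ_t v_t ∈ ℤ^n). -/

import Mathlib

open scoped BigOperators

noncomputable section

/-- `x ∈ ℝ^n` is a rational point: all its coordinates are rational. -/
def IsRationalPoint {n : ℕ} (x : Fin n → ℝ) : Prop := ∀ i, ∃ q : ℚ, x i = (q : ℝ)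

/-- `den x` : the least common denominator of the coordinates of a rational point `x`. -/
noncomputable def den {n : ℕ} (x : Fin n → ℝ) : ℕ :=
  sInf {d : ℕ | 0 < d ∧ ∀ i, ∃ z : ℤ, (d : ℝ) * x i = (z : ℝ)}

/-- The homogeneous correspondent `ṽ = den(v)·(v,1) ∈ ℤ^{n+1}` of a rational point,
viewed as a real vector (its entries are integers when `v` is rational). -/
noncomputable def homCorr {n : ℕ} (x : Fin n → ℝ) : Fin (n + 1) → ℝ :=
  Fin.snoc (fun i => (den x : ℝ) * x i) (den x)

/-- The finite set `V` is the vertex set of a rational simplex. -/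
def IsRationalSimplex {n : ℕ} (V : Finset (Fin n → ℝ)) : Prop :=
  (∀ v ∈ V, IsRationalPoint v) ∧
    AffineIndependent ℝ (fun v : V => (v : Fin n → ℝ))

/-- The finite set `V` is the vertex set of a regular rational simplex: the homogeneous
correspondents of its vertices can be extended to a basis of the free abelian group `ℤ^{n+1}`. -/
def IsRegularSimplex {n : ℕ} (V : Finset (Fin n → ℝ)) : Prop :=
  IsRationalSimplex V ∧
    ∃ (b : Module.Basis (Fin (n + 1)) ℤ (Fin (n + 1) → ℤ)) (f : V → Fin (n + 1)),
      Function.Injective f ∧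
        ∀ v : V, (fun i => ((b (f v) i : ℤ) : ℝ)) = homCorr (v : Fin n → ℝ)

/-- An indexed family of points is the vertex family of a regular rational simplex. -/
def IsRegularFamily {n k : ℕ} (x : Fin k → (Fin n → ℝ)) : Prop :=
  (∀ i, IsRationalPoint (x i)) ∧ AffineIndependent ℝ x ∧
    ∃ (b : Module.Basis (Fin (n + 1)) ℤ (Fin (n + 1) → ℤ)) (f : Fin k → Fin (n + 1)),
      Function.Injective f ∧ ∀ i, (fun j => ((b (f i) j : ℤ) : ℝ)) = homCorr (x i)

/-- A (finite, geometric) simplicial complex, presented by the vertex sets of its simplexes. -/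
def IsSimplicialComplex {n : ℕ} (K : Finset (Finset (Fin n → ℝ))) : Prop :=
  (∀ V ∈ K, V.Nonempty ∧ AffineIndependent ℝ (fun v : V => (v : Fin n → ℝ))) ∧
  (∀ V ∈ K, ∀ W, W ⊆ V → W.Nonempty → W ∈ K) ∧
  (∀ V ∈ K, ∀ W ∈ K,
    convexHull ℝ (V : Set (Fin n → ℝ)) ∩ convexHull ℝ (W : Set (Fin n → ℝ)) =
      convexHull ℝ ((V : Set (Fin n → ℝ)) ∩ (W : Set (Fin n → ℝ))))

/-- The support of a simplicial complex: the union of its simplexes. -/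
def complexSupport {n : ℕ} (K : Finset (Finset (Fin n → ℝ))) : Set (Fin n → ℝ) :=
  ⋃ V ∈ K, convexHull ℝ (V : Set (Fin n → ℝ))

/-- The set of vertices of a simplicial complex. -/
def complexVerts {n : ℕ} (K : Finset (Finset (Fin n → ℝ))) : Set (Fin n → ℝ) :=
  ⋃ V ∈ K, (V : Set (Fin n → ℝ))

/-- `K` is a triangulation of `P`: a simplicial complex all of whose simplexes are rational,
with support `P`. -/
def IsTriangulation {n : ℕ} (K : Finset (Finset (Fin n → ℝ))) (P : Set (Fin n → ℝ)) : Prop :=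
  IsSimplicialComplex K ∧ (∀ V ∈ K, IsRationalSimplex V) ∧ complexSupport K = P

/-- `K` is a regular triangulation of `P`: all its simplexes are regular. -/
def IsRegularTriangulation {n : ℕ} (K : Finset (Finset (Fin n → ℝ)))
    (P : Set (Fin n → ℝ)) : Prop :=
  IsTriangulation K P ∧ ∀ V ∈ K, IsRegularSimplex V

/-- `K` is a subdivision of `Δ`: each simplex of `K` is contained in some simplex of `Δ`. -/
def IsSubdivision {n : ℕ} (K Δ : Finset (Finset (Fin n → ℝ))) : Prop :=
  ∀ V ∈ K, ∃ W ∈ Δ, convexHull ℝ (V : Set (Fin n → ℝ)) ⊆ convexHull ℝ (W : Set (Fin n → ℝ))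

/-- `K` is a strongly regular triangulation of `P`: a regular triangulation all of whose
maximal simplexes have vertices whose denominators have greatest common divisor 1. -/
def IsStronglyRegularTriangulation {n : ℕ} (K : Finset (Finset (Fin n → ℝ)))
    (P : Set (Fin n → ℝ)) : Prop :=
  IsRegularTriangulation K P ∧
    ∀ V ∈ K, (∀ W ∈ K, V ⊆ W → W = V) → Finset.gcd V den = 1

/-- `P ⊆ ℝ^n` is a rational polyhedron: a finite union of convex hulls of
finite sets of rational points. -/
def IsRationalPolyhedron {n : ℕ} (P : Set (Fin n → ℝ)) : Prop :=
  ∃ 𝒱 : Finset (Finset (Fin n → ℝ)),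
    (∀ V ∈ 𝒱, ∀ v ∈ V, IsRationalPoint v) ∧
    P = ⋃ V ∈ 𝒱, convexHull ℝ (V : Set (Fin n → ℝ))

/-- `η` is a Z-map on `P`: continuous on `P` and piecewise (affine with integer
coefficients), with finitely many pieces. -/
def IsZMap {n m : ℕ} (P : Set (Fin n → ℝ)) (η : (Fin n → ℝ) → (Fin m → ℝ)) : Prop :=
  ContinuousOn η P ∧
    ∃ L : List (Matrix (Fin m) (Fin n) ℤ × (Fin m → ℤ)),
      ∀ x ∈ P, ∃ l ∈ L, η x = fun i => (∑ j, (l.1 i j : ℝ) * x j) + (l.2 i : ℝ)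

/-- A Z-map from `P` into `Q`. -/
def IsZMapTo {n m : ℕ} (P : Set (Fin n → ℝ)) (Q : Set (Fin m → ℝ))
    (η : (Fin n → ℝ) → (Fin m → ℝ)) : Prop :=
  IsZMap P η ∧ Set.MapsTo η P Q

/-- `η` is a Z-homeomorphism of `P` onto `Q`: a bijective Z-map whose inverse is a Z-map. -/
def IsZHomeo {n m : ℕ} (P : Set (Fin n → ℝ)) (Q : Set (Fin m → ℝ))
    (η : (Fin n → ℝ) → (Fin m → ℝ)) : Prop :=
  IsZMapTo P Q η ∧ Set.BijOn η P Q ∧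
    ∃ μ, IsZMapTo Q P μ ∧ Set.LeftInvOn μ η P ∧ Set.RightInvOn μ η Q

/-- `η` is a strict Z-map from `P` to `Q`: injective and a Z-homeomorphism onto its image. -/
def IsStrictZMap {n m : ℕ} (P : Set (Fin n → ℝ)) (Q : Set (Fin m → ℝ))
    (η : (Fin n → ℝ) → (Fin m → ℝ)) : Prop :=
  IsZMapTo P Q η ∧ Set.InjOn η P ∧ IsZHomeo P (η '' P) η

/-- `η` coincides with a single affine map on the set `S`. -/
def AffineOnSet {n m : ℕ} (η : (Fin n → ℝ) → (Fin m → ℝ)) (S : Set (Fin n → ℝ)) : Prop :=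
  ∃ (M : Matrix (Fin m) (Fin n) ℝ) (b : Fin m → ℝ),
    ∀ x ∈ S, η x = fun i => (∑ j, M i j * x j) + b i

end

private lemma den_spec' {n : ℕ} {x : Fin n → ℝ} (hx : IsRationalPoint x) :
    0 < den x ∧ ∀ i, ∃ z : ℤ, (den x : ℝ) * x i = (z : ℝ) := by
  have hne : {d : ℕ | 0 < d ∧ ∀ i, ∃ z : ℤ, (d : ℝ) * x i = (z : ℝ)}.Nonempty := by
    choose q hq using hx
    refine ⟨∏ i, (q i).den, Finset.prod_pos (fun i _ => (q i).pos), fun i => ?_⟩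
    refine ⟨(q i).num * ∏ j ∈ Finset.univ.erase i, (q j).den, ?_⟩
    have h1 : (∏ j, (q j).den) = (q i).den * ∏ j ∈ Finset.univ.erase i, (q j).den :=
      (Finset.mul_prod_erase Finset.univ _ (Finset.mem_univ i)).symm
    rw [hq i, h1]
    have hden : ((q i).den : ℝ) ≠ 0 := Nat.cast_ne_zero.mpr (q i).den_nz
    rw [Rat.cast_def]
    push_cast
    field_simp
  exact Nat.sInf_mem hne

private lemma bezout' {ι : Type*} [DecidableEq ι] (s : Finset ι) (g : ι → ℕ) :
    ∃ c : ι → ℤ, ((s.gcd g : ℕ) : ℤ) = ∑ i ∈ s, c i * g i := by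
  induction s using Finset.induction_on with
  | empty => exact ⟨0, by simp⟩
  | @insert a s ha ih =>
    obtain ⟨c, hc⟩ := ih
    refine ⟨fun i => if i = a then Nat.gcdA (g a) (s.gcd g)
      else c i * Nat.gcdB (g a) (s.gcd g), ?_⟩
    rw [Finset.gcd_insert, Finset.sum_insert ha]
    have h2 : ∑ i ∈ s, (if i = a then Nat.gcdA (g a) (s.gcd g)
        else c i * Nat.gcdB (g a) (s.gcd g)) * (g i : ℤ)
        = (∑ i ∈ s, c i * g i) * Nat.gcdB (g a) (s.gcd g) := by
      rw [Finset.sum_mul]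
      refine Finset.sum_congr rfl fun i hi => ?_
      rw [if_neg (fun h : i = a => ha (h ▸ hi))]; ring
    rw [h2, ← hc]
    have hb := Nat.gcd_eq_gcd_ab (g a) (s.gcd g)
    simp only [if_pos rfl]
    have hgcd : (GCDMonoid.gcd (g a) (s.gcd g)) = Nat.gcd (g a) (s.gcd g) := rfl
    rw [hgcd]
    push_cast [hb]
    ring

/-- Lemma (SimplexAnchvsStReg): a regular `t`-simplex with vertices `v_0, …, v_t` is strongly
regular (`gcd(den v_0, …, den v_t) = 1`) iff it is anchored (its affine hull meets `ℤ^n`). -/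
theorem statement18 {n t : ℕ} (v : Fin (t + 1) → (Fin n → ℝ)) (hv : IsRegularFamily v) :
    Finset.univ.gcd (fun i => den (v i)) = 1 ↔
      ∃ lam : Fin (t + 1) → ℝ, (∑ i, lam i) = 1 ∧
        ∀ j, ∃ z : ℤ, (∑ i, lam i * v i j) = (z : ℝ) := by
  obtain ⟨hrat, hindep, b, f, hfinj, hb⟩ := hv
  have hd := fun i => den_spec' (hrat i)
  constructor
  · -- strongly regular → anchored
    intro hgcd
    obtain ⟨c, hc⟩ := bezout' Finset.univ (fun i => den (v i))
    rw [hgcd] at hc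
    refine ⟨fun i => (c i : ℝ) * (den (v i) : ℝ), ?_, fun j => ?_⟩
    · have := hc.symm
      have h2 := congrArg (fun z : ℤ => (z : ℝ)) this
      push_cast at h2
      exact h2
    · choose zc hzc using fun i => (hd i).2
      refine ⟨∑ i, c i * zc i j, ?_⟩
      push_cast
      refine Finset.sum_congr rfl fun i _ => ?_
      rw [mul_assoc, hzc i j]
  · -- anchored → strongly regular
    rintro ⟨lam, hsum, hanch⟩
    choose zf hzf using hanch
    set w : Fin (n + 1) → ℤ := Fin.snoc zf 1 with hw
    set M : Matrix (Fin (n + 1)) (Fin (n + 1)) ℤ := Matrix.of fun k j => b k j with hM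
    set A : Matrix (Fin (n + 1)) (Fin (n + 1)) ℝ := M.map (Int.cast) with hA
    have hdne : ∀ i, ((den (v i) : ℝ)) ≠ 0 := fun i =>
      Nat.cast_ne_zero.mpr (hd i).1.ne'
    -- determinant of M is a unit
    have hMdet : IsUnit M.det := by
      have hinv : Invertible ((Pi.basisFun ℤ (Fin (n + 1))).toMatrix ⇑b) :=
        (Pi.basisFun ℤ (Fin (n + 1))).invertibleToMatrix b
      have hMt : (Pi.basisFun ℤ (Fin (n + 1))).toMatrix ⇑b = M.transpose := by
        ext i k
        simp [Module.Basis.toMatrix_apply, hM, Matrix.transpose_apply]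
      have := Matrix.isUnit_det_of_invertible ((Pi.basisFun ℤ (Fin (n + 1))).toMatrix ⇑b)
      rwa [hMt, Matrix.det_transpose] at this
    have hAdet : A.det ≠ 0 := by
      have : A.det = ((M.det : ℤ) : ℝ) := ((Int.castRingHom ℝ).map_det M).symm
      rw [this]
      exact_mod_cast hMdet.ne_zero
    set c1 : Fin (n + 1) → ℝ := fun k => ((b.repr w k : ℤ) : ℝ) with hc1
    set c2 : Fin (n + 1) → ℝ :=
      fun k => ∑ i, if f i = k then lam i / (den (v i) : ℝ) else 0 with hc2
    have key1 : ∀ j, ∑ k, c1 k * A k j = (w j : ℝ) := by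
      intro j
      have h := congrFun (b.sum_repr w) j
      rw [Finset.sum_apply] at h
      have h' : ∑ k, (b.repr w k) * (b k j) = w j := by
        simpa [smul_eq_mul] using h
      calc ∑ k, c1 k * A k j = ((∑ k, (b.repr w k) * (b k j) : ℤ) : ℝ) := by
            push_cast; rfl
        _ = (w j : ℝ) := by rw [h']
    have key2 : ∀ j, ∑ k, c2 k * A k j = (w j : ℝ) := by
      intro j
      have step : ∑ k, c2 k * A k j
          = ∑ i, (lam i / (den (v i) : ℝ)) * homCorr (v i) j := by
        rw [hc2]
        simp only [Finset.sum_mul]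
        rw [Finset.sum_comm]
        refine Finset.sum_congr rfl fun i _ => ?_
        have hAi : A (f i) j = homCorr (v i) j := by
          rw [hA, hM]
          simpa using congrFun (hb i) j
        simp only [ite_mul, zero_mul, Finset.sum_ite_eq, Finset.mem_univ, if_true, hAi]
      rw [step]
      refine Fin.lastCases ?_ ?_ j
      · -- j = last
        have hwl : w (Fin.last n) = 1 := by rw [hw]; simp
        rw [hwl]
        have : ∀ i, (lam i / (den (v i) : ℝ)) * homCorr (v i) (Fin.last n) = lam i := by
          intro i
          rw [homCorr, Fin.snoc_last]
          exact div_mul_cancel₀ (lam i) (hdne i)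
        rw [Finset.sum_congr rfl fun i _ => this i]
        simpa using hsum
      · intro j'
        have hwc : w (Fin.castSucc j') = zf j' := by rw [hw]; simp
        rw [hwc]
        have : ∀ i, (lam i / (den (v i) : ℝ)) * homCorr (v i) (Fin.castSucc j')
            = lam i * v i j' := by
          intro i
          rw [homCorr, Fin.snoc_castSucc, ← mul_assoc, div_mul_cancel₀ (lam i) (hdne i)]
        rw [Finset.sum_congr rfl fun i _ => this i, hzf j']
    have hceq : c1 = c2 := by
      have hvm : Matrix.vecMul (c1 - c2) A = 0 := by
        funext j
        simp only [Matrix.vecMul, dotProduct, Pi.sub_apply, sub_mul,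
          Finset.sum_sub_distrib, key1 j, key2 j, sub_self, Pi.zero_apply]
      have := Matrix.eq_zero_of_vecMul_eq_zero hAdet hvm
      exact sub_eq_zero.mp this
    -- extract λ i = m i * d i
    have hlam : ∀ i, lam i = ((b.repr w (f i) : ℤ) : ℝ) * (den (v i) : ℝ) := by
      intro i
      have h := congrFun hceq (f i)
      simp only [hc1, hc2] at h
      have h2 : ∑ i', (if f i' = f i then lam i' / (den (v i') : ℝ) else 0)
          = lam i / (den (v i) : ℝ) := by
        rw [Finset.sum_eq_single i]
        · simp
        · intro i' _ hne
          rw [if_neg (fun hf => hne (hfinj hf))]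
        · intro habs; exact absurd (Finset.mem_univ i) habs
      rw [h2] at h
      rw [h, div_mul_cancel₀ (lam i) (hdne i)]
    have hZ : (∑ i, (b.repr w (f i) : ℤ) * (den (v i) : ℤ)) = 1 := by
      have : (1 : ℝ) = ∑ i, ((b.repr w (f i) : ℤ) : ℝ) * (den (v i) : ℝ) := by
        rw [← hsum]
        exact Finset.sum_congr rfl fun i _ => hlam i
      exact_mod_cast this.symm
    have hdvd : ((Finset.univ.gcd (fun i => den (v i)) : ℕ) : ℤ) ∣ 1 := by
      rw [← hZ]
      refine Finset.dvd_sum fun i _ => Dvd.dvd.mul_left ?_ _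
      exact_mod_cast Int.natCast_dvd_natCast.mpr (Finset.gcd_dvd (Finset.mem_univ i))
    exact Nat.dvd_one.mp (Int.ofNat_dvd.mp (by exact_mod_cast hdvd))
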